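/- (Neyman–Pearson for anisotropic Laplace, part 2) Let x, μ, δ ∈ ℝ^d and λ₁,…,λ_d > 0. Let X be a random vector whose i-th coordinate is an independent Laplace random variable with location x_i + μ_i and scale λ_i, and Y a random vector whose i-th coordinate is an independent Laplace random variable with location x_i + μ_i + δ_i and scale λ_i. Let h : ℝ^d → {0,1} be any deterministic measurable function. If S = { z ∈ ℝ^d : Σ_{i=1}^d (1/λ_i)·(|z_i − (x_i+μ_i) − δ_i| − |z_i − (x_i+μ_i)|) ≤ β } for some β ∈ ℝ and P(h(X)=1) ≤ P(X ∈ S), then P(h(Y)=1) ≤ P(Y ∈ S). -/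

import Mathlib

open MeasureTheory ProbabilityTheory

/-- The Laplace measure on `ℝ` with location `m` and scale `l`, given by the density
`z ↦ (1/(2l)) · exp(−|z − m|/l)` with respect to Lebesgue measure. -/
noncomputable def laplaceReal (m l : ℝ) : Measure ℝ :=
  volume.withDensity fun z => ENNReal.ofReal ((2 * l)⁻¹ * Real.exp (-|z - m| / l))

section Aux
open Set Real
open scoped ENNReal

lemma lapdens_meas (m l : ℝ) :
    Measurable fun z : ℝ => ENNReal.ofReal ((2 * l)⁻¹ * Real.exp (-|z - m| / l)) := by
  fun_prop

lemma integrable_exp_neg_abs_div {l : ℝ} (hl : 0 < l) :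
    Integrable (fun z : ℝ => Real.exp (-|z| / l)) := by
  have h1 : IntegrableOn (fun z : ℝ => Real.exp (-|z| / l)) (Ioi 0) := by
    refine (exp_neg_integrableOn_Ioi 0 (b := l⁻¹) (by positivity)).congr_fun (fun x hx => ?_)
      measurableSet_Ioi
    rw [abs_of_pos hx]; ring_nf
  have h2 : IntegrableOn (fun z : ℝ => Real.exp (-|z| / l)) (Iic 0) := by
    rw [← Measure.map_neg_eq_self (volume : Measure ℝ)]
    have m : MeasurableEmbedding fun x : ℝ => -x := (Homeomorph.neg ℝ).measurableEmbedding
    rw [m.integrableOn_map_iff]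
    simp_rw [Function.comp_def, abs_neg, neg_preimage, neg_Iic, neg_zero]
    exact (integrableOn_Ici_iff_integrableOn_Ioi).mpr h1
  have := h2.union h1
  rwa [Iic_union_Ioi, integrableOn_univ] at this

lemma laplaceReal_finite (m : ℝ) {l : ℝ} (hl : 0 < l) :
    IsFiniteMeasure (laplaceReal m l) := by
  constructor
  rw [laplaceReal, withDensity_apply _ MeasurableSet.univ, Measure.restrict_univ]
  have hint : Integrable (fun z : ℝ => (2 * l)⁻¹ * Real.exp (-|z - m| / l)) := by
    have := ((integrable_exp_neg_abs_div hl).comp_sub_right m).const_mul (2 * l)⁻¹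
    simpa using this
  exact hint.lintegral_lt_top

lemma laplaceReal_shift (m δ : ℝ) {l : ℝ} (hl : 0 < l) :
    laplaceReal (m + δ) l =
      (laplaceReal m l).withDensity
        (fun z => ENNReal.ofReal (Real.exp (-((|z - m - δ| - |z - m|) / l)))) := by
  rw [laplaceReal, laplaceReal, ← withDensity_mul _ (by fun_prop) (by fun_prop)]
  congr 1
  funext z
  simp only [Pi.mul_apply]
  rw [← ENNReal.ofReal_mul (by positivity)]
  congr 1
  rw [mul_assoc, ← Real.exp_add]
  congr 2
  rw [sub_sub z m δ]
  field_simp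
  ring

lemma lintegral_pi_prod : ∀ (n : ℕ) (ν : Fin n → Measure ℝ), (∀ i, SigmaFinite (ν i)) →
    ∀ (f : Fin n → ℝ → ℝ≥0∞), (∀ i, Measurable (f i)) →
    ∫⁻ z, ∏ i, f i (z i) ∂Measure.pi ν = ∏ i, ∫⁻ t, f i t ∂ν i := by
  intro n
  induction n with
  | zero =>
    intro ν _ f _
    simp [Measure.pi_of_empty]
  | succ n ih =>
    intro ν hν f hf
    haveI := hν
    have hmp := (MeasureTheory.measurePreserving_piFinSuccAbove ν 0).symm
    rw [← hmp.lintegral_comp_emb (MeasurableEquiv.measurableEmbedding _)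
      (fun z => ∏ i, f i (z i))]
    have key : ∀ p : ℝ × (Fin n → ℝ),
        (∏ i, f i (((MeasurableEquiv.piFinSuccAbove (fun _ : Fin (n+1) => ℝ) 0).symm p) i))
          = f 0 p.1 * ∏ j : Fin n, f j.succ (p.2 j) := by
      intro p
      rw [Fin.prod_univ_succ]
      have h0 : ((MeasurableEquiv.piFinSuccAbove (fun _ : Fin (n+1) => ℝ) 0).symm p) 0
          = p.1 := by
        simp [MeasurableEquiv.piFinSuccAbove]
      have hs : ∀ j : Fin n,
          ((MeasurableEquiv.piFinSuccAbove (fun _ : Fin (n+1) => ℝ) 0).symm p) j.succ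
            = p.2 j := by
        intro j
        have : (j.succ : Fin (n+1)) = (0 : Fin (n+1)).succAbove j := by
          rw [Fin.succAbove_zero]
        rw [this]
        simp [MeasurableEquiv.piFinSuccAbove]
      rw [h0]
      exact congrArg _ (Finset.prod_congr rfl fun j _ => by rw [hs j])
    simp only [key]
    have hg : Measurable fun y : Fin n → ℝ => ∏ j, f j.succ (y j) :=
      Finset.measurable_prod Finset.univ fun j _ => (hf j.succ).comp (measurable_pi_apply j)
    rw [lintegral_prod_mul (hf 0).aemeasurable hg.aemeasurable]
    simp only [Fin.succAbove_zero]
    rw [ih _ (fun j => hν _) _ (fun j => hf j.succ), Fin.prod_univ_succ]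

lemma pi_withDensity {n : ℕ} (ν : Fin n → Measure ℝ) [∀ i, SigmaFinite (ν i)]
    (g : Fin n → ℝ → ℝ≥0∞) (hg : ∀ i, Measurable (g i))
    [∀ i, SigmaFinite ((ν i).withDensity (g i))] :
    Measure.pi (fun i => (ν i).withDensity (g i)) =
      (Measure.pi ν).withDensity (fun z => ∏ i, g i (z i)) := by
  refine Measure.pi_eq fun s hs => ?_
  rw [withDensity_apply _ (MeasurableSet.univ_pi hs), ← lintegral_indicator (MeasurableSet.univ_pi hs)]
  have hind : ∀ z : Fin n → ℝ,
      (Set.univ.pi s).indicator (fun z => ∏ i, g i (z i)) z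
        = ∏ i, (s i).indicator (g i) (z i) := by
    intro z
    by_cases hz : z ∈ Set.univ.pi s
    · rw [Set.indicator_of_mem hz]
      exact Finset.prod_congr rfl fun i _ =>
        (Set.indicator_of_mem (hz i (Set.mem_univ i)) _).symm
    · rw [Set.indicator_of_notMem hz]
      rw [Set.mem_univ_pi] at hz
      push_neg at hz
      obtain ⟨i, hi⟩ := hz
      exact (Finset.prod_eq_zero (Finset.mem_univ i)
        (Set.indicator_of_notMem hi _)).symm
  simp_rw [hind]
  rw [lintegral_pi_prod n ν inferInstance _ (fun i => (hg i).indicator (hs i))]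
  exact Finset.prod_congr rfl fun i _ => by
    rw [lintegral_indicator (hs i), withDensity_apply _ (hs i)]

end Aux

open scoped ENNReal

/-- Neyman–Pearson for anisotropic Laplace noise, part 2. -/
theorem neyman_pearson_laplace_two
    {d : ℕ} (x μ δ : Fin d → ℝ) (lam : Fin d → ℝ) (hlam : ∀ i, 0 < lam i)
    (μX μY : Measure (Fin d → ℝ))
    (hμX : μX = Measure.pi fun i : Fin d => laplaceReal (x i + μ i) (lam i))
    (hμY : μY = Measure.pi fun i : Fin d => laplaceReal (x i + μ i + δ i) (lam i))
    (h : (Fin d → ℝ) → Bool) (hh : Measurable h)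
    (β : ℝ) (S : Set (Fin d → ℝ))
    (hS : S = {z | ∑ i, (1 / lam i) * (|z i - (x i + μ i) - δ i| - |z i - (x i + μ i)|) ≤ β})
    (hcond : μX {z | h z = true} ≤ μX S) :
    μY {z | h z = true} ≤ μY S := by
  classical
  set A : Set (Fin d → ℝ) := {z | h z = true} with hA
  set f : (Fin d → ℝ) → ℝ :=
    fun z => ∑ i, (1 / lam i) * (|z i - (x i + μ i) - δ i| - |z i - (x i + μ i)|) with hfdef
  have hfmeas : Measurable f := by
    apply Finset.measurable_sum
    intro i _
    fun_prop
  set G : (Fin d → ℝ) → ℝ≥0∞ := fun z => ENNReal.ofReal (Real.exp (-f z)) with hGdef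
  have hGmeas : Measurable G := by fun_prop
  have hAmeas : MeasurableSet A := hh (MeasurableSet.singleton true)
  have hSmeas : MeasurableSet S := by
    rw [hS]
    exact measurableSet_le hfmeas measurable_const
  -- finiteness
  haveI hfin : ∀ i, IsFiniteMeasure (laplaceReal (x i + μ i) (lam i)) :=
    fun i => laplaceReal_finite _ (hlam i)
  haveI : IsFiniteMeasure μX := by rw [hμX]; infer_instance
  -- density functions
  set g : Fin d → ℝ → ℝ≥0∞ :=
    fun i t => ENNReal.ofReal (Real.exp (-((|t - (x i + μ i) - δ i| - |t - (x i + μ i)|) / lam i)))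
    with hgdef
  have hgmeas : ∀ i, Measurable (g i) := by intro i; fun_prop
  have hshift : ∀ i, laplaceReal (x i + μ i + δ i) (lam i)
      = (laplaceReal (x i + μ i) (lam i)).withDensity (g i) :=
    fun i => laplaceReal_shift _ _ (hlam i)
  haveI hwdfin : ∀ i, SigmaFinite ((laplaceReal (x i + μ i) (lam i)).withDensity (g i)) := by
    intro i
    rw [← hshift i]
    haveI := laplaceReal_finite (x i + μ i + δ i) (hlam i)
    infer_instance
  have hwd : μY = μX.withDensity G := by
    rw [hμY, hμX]
    have e1 : (Measure.pi fun i : Fin d => laplaceReal (x i + μ i + δ i) (lam i))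
        = Measure.pi fun i => (laplaceReal (x i + μ i) (lam i)).withDensity (g i) := by
      congr 1
      funext i
      exact hshift i
    rw [e1, pi_withDensity _ _ hgmeas]
    congr 1
    funext z
    rw [hgdef]
    simp only []
    rw [← ENNReal.ofReal_prod_of_nonneg (fun i _ => (Real.exp_pos _).le), ← Real.exp_sum]
    congr 2
    rw [hfdef, ← Finset.sum_neg_distrib]
    refine Finset.sum_congr rfl fun i _ => ?_
    rw [one_div, div_eq_inv_mul]
  -- key measure inequality for μX
  have key : μX (A \ S) ≤ μX (S \ A) := by
    have h1 : μX (A ∩ S) + μX (A \ S) = μX A := measure_inter_add_diff A hSmeas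
    have h2 : μX (S ∩ A) + μX (S \ A) = μX S := measure_inter_add_diff S hAmeas
    rw [Set.inter_comm] at h2
    have hc : μX (A ∩ S) + μX (A \ S) ≤ μX (A ∩ S) + μX (S \ A) := by
      rw [h1, h2]; exact hcond
    exact (ENNReal.add_le_add_iff_left (measure_ne_top μX _)).mp hc
  -- bounds for G on the two regions
  have hup : ∀ z ∈ A \ S, G z ≤ ENNReal.ofReal (Real.exp (-β)) := by
    intro z hz
    have hzS : ¬ f z ≤ β := by
      have := hz.2
      rw [hS] at this
      exact this
    apply ENNReal.ofReal_le_ofReal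
    exact Real.exp_le_exp.mpr (by linarith [not_le.mp hzS])
  have hlow : ∀ z ∈ S \ A, ENNReal.ofReal (Real.exp (-β)) ≤ G z := by
    intro z hz
    have hzS : f z ≤ β := by
      have := hz.1
      rw [hS] at this
      exact this
    apply ENNReal.ofReal_le_ofReal
    exact Real.exp_le_exp.mpr (by linarith)
  -- conclude
  have mid : μY (A \ S) ≤ μY (S \ A) := by
    rw [hwd, withDensity_apply _ (hAmeas.diff hSmeas), withDensity_apply _ (hSmeas.diff hAmeas)]
    calc ∫⁻ z in A \ S, G z ∂μX
        ≤ ∫⁻ _ in A \ S, ENNReal.ofReal (Real.exp (-β)) ∂μX :=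
          setLIntegral_mono measurable_const hup
      _ = ENNReal.ofReal (Real.exp (-β)) * μX (A \ S) := setLIntegral_const _ _
      _ ≤ ENNReal.ofReal (Real.exp (-β)) * μX (S \ A) := by gcongr
      _ = ∫⁻ _ in S \ A, ENNReal.ofReal (Real.exp (-β)) ∂μX := (setLIntegral_const _ _).symm
      _ ≤ ∫⁻ z in S \ A, G z ∂μX := setLIntegral_mono hGmeas hlow
  calc μY A = μY (A ∩ S) + μY (A \ S) := (measure_inter_add_diff A hSmeas).symm
    _ ≤ μY (A ∩ S) + μY (S \ A) := by gcongr
    _ = μY (S ∩ A) + μY (S \ A) := by rw [Set.inter_comm]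
    _ = μY S := measure_inter_add_diff S hAmeas
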